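/- The 2×2 symmetric positive matrix M with entries M₁₁=1/12, M₁₂=M₂₁=3/12, M₂₂=5/12 has rank 2, yet the bilinear form Φ(x,y)=xᵀMy induces the same order on pairs of indicator vectors of subsets of {1,2} as the rank-1 form Ψ(x,y)=xᵀNy with N₁₁=1/16, N₁₂=N₂₁=3/16, N₂₂=9/16: for all A,B,C,D ⊆ {1,2}, Φ(1_A,1_B) ≥ Φ(1_C,1_D) iff Ψ(1_A,1_B) ≥ Ψ(1_C,1_D). -/
import Mathlib


/-- The bilinear form `xᵀ M y` evaluated at indicator vectors of the sets `A`, `B`. -/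
noncomputable def bq (M : Matrix (Fin 2) (Fin 2) ℝ) (A B : Finset (Fin 2)) : ℝ :=
  ∑ i ∈ A, ∑ j ∈ B, M i j

lemma sum2_aux (f : Fin 2 → ℝ) (A : Finset (Fin 2)) :
    ∑ i ∈ A, f i = (if 0 ∈ A then f 0 else 0) + (if 1 ∈ A then f 1 else 0) := by
  rw [show A = Finset.univ ∩ A from (Finset.univ_inter A).symm, ← Finset.sum_ite_mem,
    Fin.sum_univ_two]
  simp

set_option maxHeartbeats 2000000 in
theorem stmt_17 :
    (!![1/12, 3/12; 3/12, 5/12] : Matrix (Fin 2) (Fin 2) ℝ).rank = 2 ∧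
    (!![1/16, 3/16; 3/16, 9/16] : Matrix (Fin 2) (Fin 2) ℝ).rank = 1 ∧
    ∀ A B C D : Finset (Fin 2),
      (bq !![1/12, 3/12; 3/12, 5/12] C D ≤ bq !![1/12, 3/12; 3/12, 5/12] A B ↔
        bq !![1/16, 3/16; 3/16, 9/16] C D ≤ bq !![1/16, 3/16; 3/16, 9/16] A B) := by
  refine ⟨?_, ?_, ?_⟩
  · rw [Matrix.rank_of_isUnit]
    · simp
    · rw [Matrix.isUnit_iff_isUnit_det]
      simp [Matrix.det_fin_two]
      norm_num
  · set N : Matrix (Fin 2) (Fin 2) ℝ := !![1/16, 3/16; 3/16, 9/16] with hN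
    have hfac : N = (!![(1:ℝ)/4; 3/4] : Matrix (Fin 2) (Fin 1) ℝ) * !![(1:ℝ)/4, 3/4] := by
      ext i j
      fin_cases i <;> fin_cases j <;> norm_num [Matrix.mul_apply, hN, Fin.sum_univ_succ]
    have hle : N.rank ≤ 1 := by
      rw [hfac]
      calc _ ≤ (!![(1:ℝ)/4; 3/4] : Matrix (Fin 2) (Fin 1) ℝ).rank := Matrix.rank_mul_le_left _ _
      _ ≤ 1 := by
        simpa using Matrix.rank_le_card_width (!![(1:ℝ)/4; 3/4] : Matrix (Fin 2) (Fin 1) ℝ)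
    have hge : 1 ≤ N.rank := by
      by_contra h
      push_neg at h
      interval_cases hr : N.rank
      rw [Matrix.rank, Submodule.finrank_eq_zero, LinearMap.range_eq_bot] at hr
      have := congrFun (congrFun (congrArg DFunLike.coe hr) ![0,1]) 1
      simp [Matrix.mulVecLin, Matrix.mulVec, dotProduct, hN, Fin.sum_univ_succ] at this
    omega
  · intro A B C D
    simp only [bq, sum2_aux, Matrix.cons_val', Matrix.cons_val_zero, Matrix.cons_val_one,
      Matrix.head_cons, Matrix.empty_val', Matrix.cons_val_fin_one, Matrix.head_fin_const]
    split_ifs <;> norm_num
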